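/- Let p be a prime and a_p a totally real algebraic integer such that |σ(a_p)| ≤ 2√p for every real embedding σ of ℚ(a_p). Then (p+1+a_p)(p+1−a_p) is a unit in the ring of all algebraic integers if and only if p = 2 and a_p² = 8. -/

import Mathlib

open NumberField

theorem stmt_2 (p : ℕ) (hp : p.Prime) (K : Type*) [Field K] [NumberField K]
    (a : 𝓞 K)
    (hreal : ∀ σ : K →+* ℂ, (σ (a : K)).im = 0)
    (hbound : ∀ σ : K →+* ℂ, ‖σ (a : K)‖ ≤ 2 * Real.sqrt p) :
    IsUnit (((p : 𝓞 K) + 1 + a) * ((p : 𝓞 K) + 1 - a)) ↔ p = 2 ∧ a ^ 2 = 8 := by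
  classical
  have hp2 : 2 ≤ p := hp.two_le
  have hp2R : (2 : ℝ) ≤ (p : ℝ) := by exact_mod_cast hp2
  set u : 𝓞 K := ((p : 𝓞 K) + 1 + a) * ((p : 𝓞 K) + 1 - a) with hu
  set f : (K →+* ℂ) → ℝ := fun σ => (σ (a : K)).re with hf
  have hfa : ∀ σ : K →+* ℂ, σ (a : K) = (f σ : ℂ) := fun σ =>
    Complex.ext rfl (by simp [hf, hreal σ])
  set g : (K →+* ℂ) → ℝ := fun σ => ((p : ℝ) + 1) ^ 2 - f σ ^ 2 with hg
  have hsq : ∀ σ : K →+* ℂ, f σ ^ 2 ≤ 4 * p := by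
    intro σ
    have h1 : |f σ| ≤ 2 * Real.sqrt p := by
      have := hbound σ
      rwa [hfa σ, Complex.norm_real, Real.norm_eq_abs] at this
    calc f σ ^ 2 = |f σ| ^ 2 := (sq_abs _).symm
      _ ≤ (2 * Real.sqrt p) ^ 2 := pow_le_pow_left₀ (abs_nonneg _) h1 2
      _ = 4 * p := by
          rw [mul_pow, Real.sq_sqrt (by positivity)]; norm_num
  have hglb : ∀ σ : K →+* ℂ, ((p : ℝ) - 1) ^ 2 ≤ g σ := by
    intro σ
    have := hsq σ
    simp only [hg]
    nlinarith
  have h1le : ∀ σ : K →+* ℂ, (1 : ℝ) ≤ g σ := by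
    intro σ
    refine le_trans ?_ (hglb σ)
    nlinarith
  have hσu : ∀ σ : K →+* ℂ, σ (u : K) = (g σ : ℂ) := by
    intro σ
    have h : (u : K) = ((p : K) + 1 + (a : K)) * ((p : K) + 1 - (a : K)) := by
      rw [hu]; push_cast; ring
    rw [h]
    simp only [map_mul, map_add, map_sub, map_natCast, map_one, hfa σ, hg]
    push_cast
    ring
  have hnorm : ((Algebra.norm ℚ (u : K) : ℚ) : ℂ) = ((∏ σ : K →+* ℂ, g σ : ℝ) : ℂ) := by
    have h0 : ((Algebra.norm ℚ (u : K) : ℚ) : ℂ) = algebraMap ℚ ℂ (Algebra.norm ℚ (u : K)) := by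
      simp [eq_ratCast]
    rw [h0, Algebra.norm_eq_prod_embeddings]
    rw [← Fintype.prod_equiv (RingHom.equivRatAlgHom K ℂ) (fun σ : K →+* ℂ => σ (u : K))
      (fun φ : K →ₐ[ℚ] ℂ => φ (u : K)) (fun σ => rfl)]
    push_cast
    exact Finset.prod_congr rfl fun σ _ => hσu σ
  have hnormR : ((Algebra.norm ℚ (u : K) : ℚ) : ℝ) = ∏ σ : K →+* ℂ, g σ := by
    exact_mod_cast hnorm
  have hne : Nonempty (K →+* ℂ) := by
    have h := NumberField.Embeddings.card K ℂ
    have hpos : 0 < Fintype.card (K →+* ℂ) := by rw [h]; exact Module.finrank_pos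
    exact Fintype.card_pos_iff.mp hpos
  obtain ⟨σ₀⟩ := hne
  have hprod_rest : ∀ σ : K →+* ℂ,
      (1 : ℝ) ≤ ∏ τ ∈ Finset.univ.erase σ, g τ := by
    intro σ
    calc (1 : ℝ) = ∏ _τ ∈ Finset.univ.erase σ, (1 : ℝ) := by simp
      _ ≤ ∏ τ ∈ Finset.univ.erase σ, g τ :=
        Finset.prod_le_prod (fun τ _ => by norm_num) (fun τ _ => h1le τ)
  constructor
  · intro hunit
    have habs : |(RingOfIntegers.norm ℚ u : ℚ)| = 1 := NumberField.isUnit_iff_norm.mp hunit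
    have habs' : |(Algebra.norm ℚ (u : K) : ℚ)| = 1 := by
      rwa [RingOfIntegers.coe_norm] at habs
    have hge1 : (1 : ℝ) ≤ ∏ σ : K →+* ℂ, g σ := by
      calc (1 : ℝ) = ∏ _σ : K →+* ℂ, (1 : ℝ) := by simp
        _ ≤ ∏ σ : K →+* ℂ, g σ :=
          Finset.prod_le_prod (fun σ _ => by norm_num) (fun σ _ => h1le σ)
    have hprod1 : ∏ σ : K →+* ℂ, g σ = 1 := by
      have h1 : |((Algebra.norm ℚ (u : K) : ℚ) : ℝ)| = 1 := by
        rw [← Rat.cast_abs, habs']; norm_num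
      rw [hnormR] at h1
      rcases abs_eq (by norm_num : (0:ℝ) ≤ 1) |>.mp h1 with h | h
      · exact h
      · linarith
    have heach : ∀ σ : K →+* ℂ, g σ = 1 := by
      intro σ
      have hsplit : g σ * ∏ τ ∈ Finset.univ.erase σ, g τ = 1 := by
        rw [Finset.mul_prod_erase Finset.univ g (Finset.mem_univ σ)]
        exact hprod1
      have h1 := h1le σ
      have h2 := hprod_rest σ
      nlinarith
    have hple : p = 2 := by
      have h1 : ((p : ℝ) - 1) ^ 2 ≤ 1 := le_trans (hglb σ₀) (le_of_eq (heach σ₀))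
      have : (p : ℝ) ≤ 2 := by nlinarith
      have : p ≤ 2 := by exact_mod_cast this
      omega
    refine ⟨hple, ?_⟩
    have hfsq : ∀ σ : K →+* ℂ, f σ ^ 2 = 8 := by
      intro σ
      have := heach σ
      rw [hg] at this
      simp only [hple] at this
      norm_num at this
      nlinarith [this]
    have hσa2 : σ₀ ((a : K) ^ 2) = 8 := by
      rw [map_pow, hfa σ₀, ← Complex.ofReal_pow, hfsq σ₀]
      norm_num
    have hK : (a : K) ^ 2 = 8 := by
      have h8 : σ₀ ((8 : K)) = 8 := by
        rw [show (8 : K) = ((8 : ℕ) : K) by norm_num, map_natCast]; norm_num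
      have := σ₀.injective (hσa2.trans h8.symm)
      exact this
    have : ((a ^ 2 : 𝓞 K) : K) = ((8 : 𝓞 K) : K) := by push_cast; exact hK
    exact_mod_cast this
  · rintro ⟨rfl, ha⟩
    have hu1 : u = 1 := by
      rw [hu]
      have h2 : ((2 : ℕ) : 𝓞 K) = 2 := by norm_num
      rw [h2]
      have : ((2 : 𝓞 K) + 1 + a) * ((2 : 𝓞 K) + 1 - a) = 9 - a ^ 2 := by ring
      rw [this, ha]
      norm_num
    rw [hu1]
    exact isUnit_one
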